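/- Let X be an f-Banach asymmetric normed space, K ⊆ X nonempty, convex, f-closed, f-bounded and weakly f-compact, and T : K → K f-non-expansive; assume f-convergence implies b-convergence in X. If K possesses forward normal structure (every convex bounded subset H ⊆ K with diam(H) > 0 contains a point u with sup_{v∈H} ‖v − u| < diam(H)), then T has a fixed point in K. -/

import Mathlib

open Filter Topology


section KirkAux

variable {X : Type*} [AddCommGroup X] [Module ℝ X]

lemma kirk_n0 (n : X → ℝ) (h_hom : ∀ (l : ℝ), 0 ≤ l → ∀ x, n (l • x) = l * n x) :
    n (0 : X) = 0 := by
  have := h_hom 0 le_rfl 0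
  simpa using this

lemma kirkA (n : X → ℝ)
    (h_eq : ∀ x, (n x = 0 ∧ n (-x) = 0) ↔ x = 0)
    (h_fb : ∀ (u : ℕ → X) (x : X),
      Tendsto (fun k => n (u k - x)) atTop (𝓝 0) →
      Tendsto (fun k => n (x - u k)) atTop (𝓝 0)) :
    ∀ y : X, n y = 0 → y = 0 := by
  intro y hy
  have h1 : Tendsto (fun _ : ℕ => n ((fun _ : ℕ => y) 0 - 0)) atTop (𝓝 0) := by
    simpa [hy] using (tendsto_const_nhds : Tendsto (fun _ : ℕ => (0:ℝ)) atTop (𝓝 0))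
  have h2 := h_fb (fun _ => y) 0 h1
  have h3 : (0 : ℝ) = n (0 - y) := tendsto_nhds_unique h2 tendsto_const_nhds
  refine (h_eq y).1 ⟨hy, ?_⟩
  rw [← zero_sub]; exact h3.symm

lemma kirkC (n : X → ℝ)
    (h_nonneg : ∀ x, 0 ≤ n x)
    (h_eq : ∀ x, (n x = 0 ∧ n (-x) = 0) ↔ x = 0)
    (h_hom : ∀ (l : ℝ), 0 ≤ l → ∀ x, n (l • x) = l * n x)
    (h_fb : ∀ (u : ℕ → X) (x : X),
      Tendsto (fun k => n (u k - x)) atTop (𝓝 0) →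
      Tendsto (fun k => n (x - u k)) atTop (𝓝 0)) :
    ∃ Cc : ℝ, 0 ≤ Cc ∧ ∀ y, n (-y) ≤ Cc * n y := by
  by_contra hcon
  push_neg at hcon
  choose y hy using fun k : ℕ => hcon (((k : ℝ) + 1)^2) (by positivity)
  have hypos : ∀ k : ℕ, 0 < n (y k) := by
    intro k
    rcases (h_nonneg (y k)).lt_or_eq with h | h
    · exact h
    · exfalso
      have h0 : y k = 0 := kirkA n h_eq h_fb _ h.symm
      have := hy k
      rw [h0] at this
      simp [kirk_n0 n h_hom] at this
  set z : ℕ → X := fun k => (((k : ℝ) + 1) * n (y k))⁻¹ • y k with hz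
  have hc0 : ∀ k : ℕ, (0:ℝ) < ((k : ℝ) + 1) * n (y k) := by
    intro k
    have := hypos k
    positivity
  have hz1 : ∀ k : ℕ, n (z k) = ((k : ℝ) + 1)⁻¹ := by
    intro k
    rw [hz]
    simp only
    rw [h_hom _ (inv_nonneg.mpr (hc0 k).le)]
    have h1 := (hypos k).ne'
    field_simp
  have hz2 : ∀ k : ℕ, (k : ℝ) + 1 < n (-(z k)) := by
    intro k
    have hzneg : -(z k) = (((k : ℝ) + 1) * n (y k))⁻¹ • (-(y k)) := by
      rw [hz]; simp [smul_neg]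
    rw [hzneg, h_hom _ (inv_nonneg.mpr (hc0 k).le)]
    rw [show (((k:ℝ)+1) * n (y k))⁻¹ * n (-(y k)) = n (-(y k)) / (((k:ℝ)+1) * n (y k)) by ring,
      lt_div_iff₀ (hc0 k)]
    nlinarith [hy k, hypos k]
  have h1 : Tendsto (fun k => n (z k - 0)) atTop (𝓝 0) := by
    simp only [sub_zero]
    have he : (fun k : ℕ => n (z k)) = fun k : ℕ => ((k:ℝ)+1)⁻¹ := funext hz1
    rw [he]
    simpa [one_div] using (tendsto_one_div_add_atTop_nhds_zero_nat : Tendsto (fun n : ℕ => 1 / ((n:ℝ) + 1)) atTop (𝓝 0))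
  have h2 := h_fb z 0 h1
  have h3 : ∀ᶠ k : ℕ in atTop, n (0 - z k) < 1 := h2.eventually_lt_const one_pos
  obtain ⟨k, hk⟩ := h3.exists
  rw [zero_sub] at hk
  have := hz2 k
  have : (0:ℝ) ≤ (k:ℝ) := Nat.cast_nonneg k
  linarith [hz2 k]

end KirkAux
section KirkTop

open TopologicalSpace

variable {X : Type*} [AddCommGroup X] [Module ℝ X]

/-- the forward topology -/
def ftop (n : X → ℝ) : TopologicalSpace X :=
  TopologicalSpace.generateFrom {s : Set X | ∃ x r, s = {u | n (u - x) < r}}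

lemma kirk_ball_open (n : X → ℝ) (x : X) (r : ℝ) :
    IsOpen[ftop n] {u | n (u - x) < r} :=
  isOpen_generateFrom_of_mem ⟨x, r, rfl⟩

lemma kirk_mem_open (n : X → ℝ)
    (h_hom : ∀ (l : ℝ), 0 ≤ l → ∀ x, n (l • x) = l * n x)
    (h_sub : ∀ x y, n (x + y) ≤ n x + n y) :
    ∀ s : Set X, IsOpen[ftop n] s → ∀ x ∈ s,
      ∃ ε, 0 < ε ∧ ∀ u, n (u - x) < ε → u ∈ s := by
  intro s hs
  have hs' : TopologicalSpace.GenerateOpen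
      {s : Set X | ∃ x r, s = {u | n (u - x) < r}} s := hs
  clear hs
  induction hs' with
  | basic t ht =>
    obtain ⟨z, ρ, rfl⟩ := ht
    intro x hx
    refine ⟨ρ - n (x - z), by simpa using hx, fun u hu => ?_⟩
    have h' : u - z = (u - x) + (x - z) := by abel
    have h2 : n (u - z) ≤ n (u - x) + n (x - z) := by
      rw [h']; exact h_sub _ _
    simp only [Set.mem_setOf_eq] at *
    linarith
  | univ => exact fun x _ => ⟨1, one_pos, fun _ _ => trivial⟩
  | inter a b ha hb iha ihb =>
    intro x hx
    obtain ⟨ε1, hε1, h1⟩ := iha x hx.1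
    obtain ⟨ε2, hε2, h2⟩ := ihb x hx.2
    exact ⟨min ε1 ε2, lt_min hε1 hε2,
      fun u hu => ⟨h1 u (hu.trans_le (min_le_left _ _)), h2 u (hu.trans_le (min_le_right _ _))⟩⟩
  | sUnion S hS ih =>
    intro x hx
    obtain ⟨t, htS, hxt⟩ := hx
    obtain ⟨ε, hε, h⟩ := ih t htS x hxt
    exact ⟨ε, hε, fun u hu => ⟨t, htS, h u hu⟩⟩

lemma kirk_open_of_balls (n : X → ℝ)
    (h_hom : ∀ (l : ℝ), 0 ≤ l → ∀ x, n (l • x) = l * n x)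
    (s : Set X) (hs : ∀ x ∈ s, ∃ ε, 0 < ε ∧ ∀ u, n (u - x) < ε → u ∈ s) :
    IsOpen[ftop n] s := by
  have hrep : s = ⋃₀ {b | (∃ x ε, b = {u | n (u - x) < ε}) ∧ b ⊆ s} := by
    ext u
    constructor
    · intro hu
      obtain ⟨ε, hε, hb⟩ := hs u hu
      refine ⟨{w | n (w - u) < ε}, ⟨⟨u, ε, rfl⟩, fun w hw => hb w hw⟩, ?_⟩
      show n (u - u) < ε
      rw [sub_self, kirk_n0 n h_hom]
      exact hε
    · rintro ⟨b, ⟨-, hbs⟩, hub⟩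
      exact hbs hub
  rw [hrep]
  refine @isOpen_sUnion X (ftop n) _ (fun b hb => ?_)
  obtain ⟨⟨x, ε, rfl⟩, -⟩ := hb
  exact kirk_ball_open n x ε

lemma kirk_revball_closed (n : X → ℝ)
    (h_hom : ∀ (l : ℝ), 0 ≤ l → ∀ x, n (l • x) = l * n x)
    (h_sub : ∀ x y, n (x + y) ≤ n x + n y)
    (v : X) (ρ : ℝ) : IsClosed[ftop n] {u | n (v - u) ≤ ρ} := by
  rw [← @isOpen_compl_iff X _ (ftop n)]
  refine kirk_open_of_balls n h_hom _ (fun x hx => ?_)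
  simp only [Set.mem_compl_iff, Set.mem_setOf_eq, not_le] at hx
  refine ⟨n (v - x) - ρ, by linarith, fun u hu => ?_⟩
  simp only [Set.mem_compl_iff, Set.mem_setOf_eq, not_le]
  have h' : v - x = (v - u) + (u - x) := by abel
  have h2 : n (v - x) ≤ n (v - u) + n (u - x) := by
    rw [h']; exact h_sub _ _
  linarith

lemma kirk_fwdball_closed (n : X → ℝ)
    (h_hom : ∀ (l : ℝ), 0 ≤ l → ∀ x, n (l • x) = l * n x)
    (h_sub : ∀ x y, n (x + y) ≤ n x + n y)
    (Cc : ℝ) (hCc : 0 ≤ Cc) (hCn : ∀ y, n (-y) ≤ Cc * n y)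
    (z : X) (ρ : ℝ) : IsClosed[ftop n] {u | n (u - z) ≤ ρ} := by
  rw [← @isOpen_compl_iff X _ (ftop n)]
  refine kirk_open_of_balls n h_hom _ (fun x hx => ?_)
  simp only [Set.mem_compl_iff, Set.mem_setOf_eq, not_le] at hx
  refine ⟨(n (x - z) - ρ) / (Cc + 1), div_pos (by linarith) (by linarith), fun u hu => ?_⟩
  simp only [Set.mem_compl_iff, Set.mem_setOf_eq, not_le]
  have h' : x - z = (x - u) + (u - z) := by abel
  have h2 : n (x - z) ≤ n (x - u) + n (u - z) := by
    rw [h']; exact h_sub _ _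
  have h3 : n (x - u) ≤ Cc * n (u - x) := by
    have := hCn (u - x)
    simpa using this
  have h4 : Cc * n (u - x) ≤ Cc * ((n (x - z) - ρ) / (Cc + 1)) :=
    mul_le_mul_of_nonneg_left hu.le hCc
  have h5 : Cc * ((n (x - z) - ρ) / (Cc + 1)) < (Cc + 1) * ((n (x - z) - ρ) / (Cc + 1)) := by
    have hpos : (0:ℝ) < (n (x - z) - ρ) / (Cc + 1) := div_pos (by linarith) (by linarith)
    nlinarith
  have h6 : (Cc + 1) * ((n (x - z) - ρ) / (Cc + 1)) = n (x - z) - ρ := by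
    field_simp
  linarith

end KirkTop
section KirkSep

open TopologicalSpace Pointwise

variable {X : Type*} [AddCommGroup X] [Module ℝ X]

/-- the lower topology on ℝ -/
def utop : TopologicalSpace ℝ :=
  TopologicalSpace.generateFrom {s : Set ℝ | ∃ x r, s = {u | max (u - x) 0 < r}}

lemma utop_eq : utop = TopologicalSpace.generateFrom
    {s : Set ℝ | ∃ x r, s = {u | max (u - x) 0 < r}} := rfl

lemma kirk_combo_le (n : X → ℝ)
    (h_hom : ∀ (l : ℝ), 0 ≤ l → ∀ x, n (l • x) = l * n x)
    (h_sub : ∀ x y, n (x + y) ≤ n x + n y)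
    (ρ : ℝ) (v1 v2 : X) (a b : ℝ) (ha : 0 ≤ a) (hb : 0 ≤ b) (hab : a + b = 1)
    (h1 : n v1 ≤ ρ) (h2 : n v2 ≤ ρ) : n (a • v1 + b • v2) ≤ ρ := by
  have h3 := h_sub (a • v1) (b • v2)
  rw [h_hom a ha, h_hom b hb] at h3
  have h4 : a * ρ + b * ρ = ρ := by rw [← add_mul, hab, one_mul]
  linarith [mul_le_mul_of_nonneg_left h1 ha, mul_le_mul_of_nonneg_left h2 hb]

lemma kirk_combo_lt (n : X → ℝ)
    (h_hom : ∀ (l : ℝ), 0 ≤ l → ∀ x, n (l • x) = l * n x)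
    (h_sub : ∀ x y, n (x + y) ≤ n x + n y)
    (ρ : ℝ) (v1 v2 : X) (a b : ℝ) (ha : 0 ≤ a) (hb : 0 ≤ b) (hab : a + b = 1)
    (h1 : n v1 < ρ) (h2 : n v2 < ρ) : n (a • v1 + b • v2) < ρ := by
  rcases ha.lt_or_eq with ha' | ha'
  · have h3 := h_sub (a • v1) (b • v2)
    rw [h_hom a ha, h_hom b hb] at h3
    have h4 : a * ρ + b * ρ = ρ := by rw [← add_mul, hab, one_mul]
    nlinarith [mul_lt_mul_of_pos_left h1 ha', mul_le_mul_of_nonneg_left h2.le hb, h3, h4]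
  · have hb1 : b = 1 := by linarith
    rw [← ha', hb1, zero_smul, one_smul, zero_add]
    exact h2

lemma kirk_sep (n : X → ℝ)
    (h_nonneg : ∀ x, 0 ≤ n x)
    (h_hom : ∀ (l : ℝ), 0 ≤ l → ∀ x, n (l • x) = l * n x)
    (h_sub : ∀ x y, n (x + y) ≤ n x + n y)
    (C : Set X) (hconv : Convex ℝ C) (hcl : IsClosed[ftop n] C)
    (x0 : X) (hx0 : x0 ∉ C) (c0 : X) (hc0 : c0 ∈ C) :
    ∃ (φ : X →ₗ[ℝ] ℝ) (t : ℝ), 0 < t ∧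
      (@Continuous X ℝ (ftop n) utop fun v => φ v) ∧ ∀ c ∈ C, t ≤ φ (c - x0) := by
  classical
  -- a forward ball around x0 missing C
  obtain ⟨r, hr, hball⟩ : ∃ r, 0 < r ∧ ∀ u, n (u - x0) < r → u ∉ C := by
    have hopen : IsOpen[ftop n] Cᶜ := (@isOpen_compl_iff X _ (ftop n)).mpr hcl
    obtain ⟨ε, hε, h⟩ := kirk_mem_open n h_hom h_sub Cᶜ hopen x0 hx0
    exact ⟨ε, hε, fun u hu => h u hu⟩
  have hnc0 : r ≤ n (c0 - x0) := by
    by_contra h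
    push_neg at h
    exact hball c0 h hc0
  have hnc0pos : 0 < n (c0 - x0) := lt_of_lt_of_le hr hnc0
  -- the convex absorbent open-ish set U
  set U : Set X := {w | ∃ v, n v < r ∧ ∃ c ∈ C, w = v + (c0 - c)} with hUdef
  have hVU : ∀ v : X, n v < r → v ∈ U := fun v hv =>
    ⟨v, hv, c0, hc0, by rw [sub_self, add_zero]⟩
  have hU0 : (0 : X) ∈ U := hVU 0 (by rw [kirk_n0 n h_hom]; exact hr)
  have hUconv : Convex ℝ U := by
    rintro w1 ⟨v1, hv1, c1, hc1, rfl⟩ w2 ⟨v2, hv2, c2, hc2, rfl⟩ a b ha hb hab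
    refine ⟨a • v1 + b • v2, kirk_combo_lt n h_hom h_sub r v1 v2 a b ha hb hab hv1 hv2,
      a • c1 + b • c2, hconv hc1 hc2 ha hb hab, ?_⟩
    have hcc : a • c0 + b • c0 = c0 := by rw [← add_smul, hab, one_smul]
    calc a • (v1 + (c0 - c1)) + b • (v2 + (c0 - c2))
        = (a • v1 + b • v2) + ((a • c0 + b • c0) - (a • c1 + b • c2)) := by
          rw [smul_add, smul_add, smul_sub, smul_sub]; abel
      _ = (a • v1 + b • v2) + (c0 - (a • c1 + b • c2)) := by rw [hcc]
  have habs : Absorbent ℝ U := by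
    intro x
    refine Absorbs.of_norm ⟨(n x + n (-x) + r)/r, fun c hc => ?_⟩
    have h1 : (1:ℝ) ≤ (n x + n (-x) + r)/r := by
      rw [le_div_iff₀ hr]
      have := h_nonneg x; have := h_nonneg (-x); linarith
    have hc1 : (1:ℝ) ≤ ‖c‖ := le_trans h1 hc
    have hcne : c ≠ 0 := by
      intro h
      rw [h] at hc1
      simp at hc1
      linarith
    rw [Set.singleton_subset_iff, Set.mem_smul_set_iff_inv_smul_mem₀ hcne]
    apply hVU
    rcases lt_or_gt_of_ne hcne with hneg | hpos
    · have hnorm : ‖c‖ = -c := abs_of_neg hneg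
      have heq : c⁻¹ • x = (-c)⁻¹ • (-x) := by rw [inv_neg, neg_smul_neg]
      rw [heq, h_hom _ (inv_nonneg.mpr (by linarith : (0:ℝ) ≤ -c))]
      have hcge : (n x + n (-x) + r)/r ≤ -c := by rw [← hnorm]; exact hc
      have hcge' : n x + n (-x) + r ≤ -c * r := (div_le_iff₀ hr).mp hcge
      have hpos' : (0:ℝ) < -c := by linarith
      rw [show (-c)⁻¹ * n (-x) = n (-x) / (-c) by ring, div_lt_iff₀ hpos']
      nlinarith [h_nonneg x]
    · have hnorm : ‖c‖ = c := abs_of_pos hpos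
      rw [h_hom _ (inv_nonneg.mpr hpos.le)]
      have hcge : (n x + n (-x) + r)/r ≤ c := by rw [← hnorm]; exact hc
      have hcge' : n x + n (-x) + r ≤ c * r := (div_le_iff₀ hr).mp hcge
      rw [show c⁻¹ * n x = n x / c by ring, div_lt_iff₀ hpos]
      nlinarith [h_nonneg (-x)]
  -- gauge bounded by n/r
  have hp_le : ∀ w : X, gauge U w ≤ n w / r := by
    intro w
    by_contra hcon
    push_neg at hcon
    obtain ⟨a, ha1, ha2⟩ := exists_between hcon
    have ha0 : 0 < a := lt_of_le_of_lt (div_nonneg (h_nonneg w) hr.le) ha1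
    have hmem : w ∈ a • U := by
      rw [Set.mem_smul_set_iff_inv_smul_mem₀ ha0.ne']
      apply hVU
      rw [h_hom _ (inv_nonneg.mpr ha0.le)]
      rw [div_lt_iff₀ hr] at ha1
      rw [show a⁻¹ * n w = n w / a by ring, div_lt_iff₀ ha0]
      linarith
    exact absurd (gauge_le_of_mem ha0.le hmem) (not_le.mpr ha2)
  -- c0 - x0 is outside U, with gauge at least one
  have hnotmem : c0 - x0 ∉ U := by
    rintro ⟨v, hv, c, hc, hw⟩
    have h1 : v = (c0 - x0) - (c0 - c) := eq_sub_of_add_eq hw.symm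
    have h2 : (c0 - x0) - (c0 - c) = c - x0 := by abel
    refine hball c ?_ hc
    rw [← h2, ← h1]
    exact hv
  have hstar : StarConvex ℝ 0 U := hUconv.starConvex hU0
  have hge1 : 1 ≤ gauge U (c0 - x0) := one_le_gauge_of_notMem hstar (habs _) hnotmem
  have hne : c0 - x0 ≠ 0 := by
    intro h
    exact hx0 ((sub_eq_zero.mp h) ▸ hc0)
  -- Hahn-Banach extension
  set f := (LinearPMap.mkSpanSingleton (K := ℝ) (c0 - x0) (gauge U (c0 - x0)) hne : X →ₗ.[ℝ] ℝ) with hfdef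
  have hfle : ∀ z : f.domain, f z ≤ gauge U (z : X) := by
    rintro ⟨z, hz⟩
    have hz2 : z ∈ (Submodule.span ℝ {c0 - x0} : Submodule ℝ X) := hz
    obtain ⟨s, hs⟩ := Submodule.mem_span_singleton.1 hz2
    have hmem : s • (c0 - x0) ∈ f.domain := by rw [hs]; exact hz
    have happ : f ⟨s • (c0 - x0), hmem⟩ = s • gauge U (c0 - x0) :=
      LinearPMap.mkSpanSingleton'_apply _ _ _ s _
    have hzz : (⟨s • (c0 - x0), hmem⟩ : f.domain) = ⟨z, hz⟩ := Subtype.ext hs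
    rw [← hzz, happ]
    simp only
    rcases le_or_gt 0 s with hsle | hslt
    · rw [gauge_smul_of_nonneg hsle]
    · have hle0 : s • gauge U (c0 - x0) ≤ 0 := by
        rw [smul_eq_mul]
        exact mul_nonpos_of_nonpos_of_nonneg hslt.le (gauge_nonneg _)
      exact hle0.trans (gauge_nonneg _)
  obtain ⟨φ, hφf, hφle⟩ := exists_extension_of_le_sublinear f (gauge U)
    (fun c hc x => by rw [gauge_smul_of_nonneg hc.le, smul_eq_mul])
    (gauge_add_le hUconv habs) hfle
  have hφ1 : 1 ≤ φ (c0 - x0) := by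
    have h := hφf ⟨c0 - x0, Submodule.mem_span_singleton_self _⟩
    have h2 : f ⟨c0 - x0, Submodule.mem_span_singleton_self _⟩ = gauge U (c0 - x0) :=
      LinearPMap.mkSpanSingleton_apply ℝ ℝ hne _
    rw [h2] at h
    rw [show φ (c0 - x0) = φ ((⟨c0 - x0, Submodule.mem_span_singleton_self _⟩ :
      f.domain) : X) from rfl, h]
    exact hge1
  -- continuity of φ from ftop to utop
  have hcont : @Continuous X ℝ (ftop n) utop (fun v => φ v) := by
    rw [utop_eq]
    refine continuous_generateFrom_iff.mpr ?_
    rintro s ⟨a, ρ, rfl⟩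
    by_cases hρ : 0 < ρ
    · have hset : ((fun v => φ v) ⁻¹' {u | max (u - a) 0 < ρ}) = {v | φ v < a + ρ} := by
        ext v
        simp only [Set.mem_preimage, Set.mem_setOf_eq, max_lt_iff]
        constructor
        · rintro ⟨hlt, -⟩; linarith
        · intro h; exact ⟨by linarith, hρ⟩
      rw [hset]
      refine kirk_open_of_balls n h_hom _ (fun y hy => ?_)
      simp only [Set.mem_setOf_eq] at hy
      refine ⟨(a + ρ - φ y) * r, mul_pos (by linarith) hr, fun u hu => ?_⟩
      have h1 : φ (u - y) = φ u - φ y := by rw [map_sub]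
      have h2 : φ (u - y) ≤ gauge U (u - y) := hφle _
      have h3 : gauge U (u - y) ≤ n (u - y) / r := hp_le _
      have h4 : n (u - y) / r < a + ρ - φ y := by
        rw [div_lt_iff₀ hr]
        linarith
      show φ u < a + ρ
      linarith
    · have hset : ((fun v => φ v) ⁻¹' {u | max (u - a) 0 < ρ}) = (∅ : Set X) := by
        ext v
        simp only [Set.mem_preimage, Set.mem_setOf_eq, Set.mem_empty_iff_false, iff_false, not_lt]
        exact le_trans (not_lt.1 hρ) (le_max_right _ _)
      rw [hset]
      exact @isOpen_empty X (ftop n)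
  -- the separation constant
  refine ⟨φ, r / (2 * n (c0 - x0)), div_pos hr (by linarith), hcont, ?_⟩
  set t := r / (2 * n (c0 - x0)) with htdef
  have htpos : 0 < t := div_pos hr (by linarith)
  intro c hc
  have htval : t * n (c0 - x0) = r / 2 := by
    rw [htdef]
    field_simp
  have hmemU : t • (c0 - x0) + (c0 - c) ∈ U := by
    refine ⟨t • (c0 - x0), ?_, c, hc, rfl⟩
    rw [h_hom _ htpos.le, htval]
    linarith
  have hle1 : φ (t • (c0 - x0) + (c0 - c)) ≤ 1 :=
    le_trans (hφle _) (gauge_le_one_of_mem hmemU)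
  have hexp : φ (t • (c0 - x0) + (c0 - c)) = t * φ (c0 - x0) + (φ (c0 - x0) - φ (c - x0)) := by
    rw [map_add, map_smul, smul_eq_mul]
    congr 1
    rw [show c0 - c = (c0 - x0) - (c - x0) by abel, map_sub]
  nlinarith [hφ1, htpos]

end KirkSep
section KirkWrap

lemma kirk_isClosed_inter {Y : Type*} (t : TopologicalSpace Y) {A B : Set Y}
    (hA : IsClosed[t] A) (hB : IsClosed[t] B) : IsClosed[t] (A ∩ B) := hA.inter hB

lemma kirk_isClosed_sInter {Y : Type*} (t : TopologicalSpace Y) {S : Set (Set Y)}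
    (h : ∀ s ∈ S, IsClosed[t] s) : IsClosed[t] (⋂₀ S) := isClosed_sInter h

lemma kirk_isClosed_biInter {Y α : Type*} (t : TopologicalSpace Y) {s : Set α} {f : α → Set Y}
    (h : ∀ i ∈ s, IsClosed[t] (f i)) : IsClosed[t] (⋂ i ∈ s, f i) := isClosed_biInter h

end KirkWrap


/-- Kirk type: an f-non-expansive self-map of a nonempty,
convex, f-closed, f-bounded, weakly f-compact subset K with forward normal
structure, in an f-Banach asymmetric normed space where f-convergence implies
b-convergence, has a fixed point. -/
theorem fixedPoint_kirk {X : Type*} [AddCommGroup X] [Module ℝ X]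
    (n : X → ℝ)
    (h_nonneg : ∀ x, 0 ≤ n x)
    (h_eq : ∀ x, (n x = 0 ∧ n (-x) = 0) ↔ x = 0)
    (h_hom : ∀ (l : ℝ), 0 ≤ l → ∀ x, n (l • x) = l * n x)
    (h_sub : ∀ x y, n (x + y) ≤ n x + n y)
    (tf : TopologicalSpace X)
    (htf : tf = TopologicalSpace.generateFrom
      {s : Set X | ∃ x r, s = {u | n (u - x) < r}})
    (h_complete : ∀ u : ℕ → X,
      (∀ ε > 0, ∃ N, ∀ m k, N ≤ k → k ≤ m → n (u m - u k) < ε) →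
      ∃ x, Tendsto (fun k => n (u k - x)) atTop (𝓝 0))
    (h_fb : ∀ (u : ℕ → X) (x : X),
      Tendsto (fun k => n (u k - x)) atTop (𝓝 0) →
      Tendsto (fun k => n (x - u k)) atTop (𝓝 0))
    (tu : TopologicalSpace ℝ)
    (htu : tu = TopologicalSpace.generateFrom
      {s : Set ℝ | ∃ x r, s = {u | max (u - x) 0 < r}})
    (dual : Set (X →ₗ[ℝ] ℝ))
    (hdual : dual = {φ : X →ₗ[ℝ] ℝ | @Continuous X ℝ tf tu fun v => φ v})
    (tw : TopologicalSpace X)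
    (htw : tw = TopologicalSpace.generateFrom
      {s : Set X | ∃ (x : X) (ε : ℝ) (m : ℕ) (φ : Fin m → (X →ₗ[ℝ] ℝ)),
        0 < ε ∧ (∀ i, φ i ∈ dual) ∧ s = {y | ∀ i, φ i (y - x) < ε}})
    (K : Set X) (hK_ne : K.Nonempty) (hK_conv : Convex ℝ K)
    (hK_closed : @IsClosed X tf K)
    (hK_bdd : ∃ x r, K ⊆ {u | n (u - x) < r})
    (hK_wcpt : @IsCompact X tw K)
    (T : X → X) (hT_maps : Set.MapsTo T K K)
    (hT_nonexp : ∀ x ∈ K, ∀ y ∈ K, n (T y - T x) ≤ n (y - x))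
    (h_normal : ∀ H ⊆ K, Convex ℝ H →
      (∃ C : ℝ, ∀ u ∈ H, ∀ v ∈ H, n (v - u) ≤ C) →
      0 < sSup {r | ∃ u ∈ H, ∃ v ∈ H, r = n (v - u)} →
      ∃ u ∈ H, sSup {r | ∃ v ∈ H, r = n (v - u)} <
        sSup {r | ∃ u' ∈ H, ∃ v ∈ H, r = n (v - u')}) :
    ∃ x ∈ K, T x = x := by
  classical
  have n0 : n (0 : X) = 0 := kirk_n0 n h_hom
  have htf' : tf = ftop n := htf
  have htu' : tu = utop := htu
  have hK_closed' : IsClosed[ftop n] K := htf' ▸ hK_closed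
  obtain ⟨Cc, hCc0, hCn⟩ := kirkC n h_nonneg h_eq h_hom h_fb
  -- Mazur: convex + f-closed implies weakly closed
  have mazur : ∀ Cs : Set X, Convex ℝ Cs → IsClosed[ftop n] Cs → @IsClosed X tw Cs := by
    intro Cs hcv hcl
    rcases Cs.eq_empty_or_nonempty with rfl | ⟨c0, hc0⟩
    · exact @isClosed_empty X tw
    rw [← @isOpen_compl_iff X _ tw, @isOpen_iff_forall_mem_open X tw _]
    intro x0 hx0
    obtain ⟨φ, t, htpos, hφcont, hsep⟩ :=
      kirk_sep n h_nonneg h_hom h_sub Cs hcv hcl x0 hx0 c0 hc0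
    have hφdual : φ ∈ dual := by
      rw [hdual]
      show @Continuous X ℝ tf tu fun v => φ v
      rw [htf', htu']
      exact hφcont
    refine ⟨{y | ∀ _ : Fin 1, φ (y - x0) < t}, ?_, ?_, ?_⟩
    · intro y hy
      have h1 : φ (y - x0) < t := hy 0
      intro hyC
      exact absurd h1 (not_lt.mpr (hsep y hyC))
    · rw [htw]
      exact TopologicalSpace.isOpen_generateFrom_of_mem
        ⟨x0, t, 1, fun _ => φ, htpos, fun _ => hφdual, rfl⟩
    · intro _
      rw [sub_self, map_zero]
      exact htpos
  -- boundedness of K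
  obtain ⟨xb, rb, hKb⟩ := hK_bdd
  obtain ⟨k0, hk0⟩ := hK_ne
  have hrb : 0 < rb := lt_of_le_of_lt (h_nonneg _) (hKb hk0)
  set Cb : ℝ := rb + Cc * rb with hCb
  have hKbound : ∀ u ∈ K, ∀ v ∈ K, n (v - u) ≤ Cb := by
    intro u hu v hv
    have h1 : n (v - xb) < rb := hKb hv
    have h2 : n (xb - u) ≤ Cc * n (u - xb) := by simpa using hCn (u - xb)
    have h3 : n (u - xb) < rb := hKb hu
    have h4 : n (v - u) ≤ n (v - xb) + n (xb - u) := by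
      calc n (v - u) = n ((v - xb) + (xb - u)) := by rw [show v - u = (v - xb) + (xb - u) by abel]
        _ ≤ n (v - xb) + n (xb - u) := h_sub _ _
    have h5 : Cc * n (u - xb) ≤ Cc * rb := mul_le_mul_of_nonneg_left h3.le hCc0
    linarith
  -- the family of admissible sets
  set F : Set (Set X) :=
    {D | D ⊆ K ∧ D.Nonempty ∧ Convex ℝ D ∧ IsClosed[ftop n] D ∧ Set.MapsTo T D D} with hF
  have hKF : K ∈ F := ⟨subset_rfl, ⟨k0, hk0⟩, hK_conv, hK_closed', hT_maps⟩
  have hFcpt : ∀ D ∈ F, @IsCompact X tw D := by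
    intro D hD
    exact hK_wcpt.of_isClosed_subset (mazur D hD.2.2.1 hD.2.2.2.1) hD.1
  have hchain : ∀ c ⊆ F, IsChain (· ⊆ ·) c → c.Nonempty → ∃ lb ∈ F, ∀ s ∈ c, lb ⊆ s := by
    intro c hcF hch hcne
    have hne : Nonempty ↥c := hcne.to_subtype
    have hdir : Directed (fun s t : Set X => s ⊇ t) (fun s : c => (s : Set X)) := by
      intro i j
      rcases eq_or_ne i j with rfl | hij
      · exact ⟨i, subset_rfl, subset_rfl⟩
      · rcases hch i.2 j.2 (Subtype.coe_ne_coe.mpr hij) with h | h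
        · exact ⟨i, subset_rfl, h⟩
        · exact ⟨j, h, subset_rfl⟩
    have hnonempty : (⋂ s : c, (s : Set X)).Nonempty :=
      @IsCompact.nonempty_iInter_of_directed_nonempty_isCompact_isClosed X tw ↥c hne
        (fun s : c => (s : Set X)) hdir (fun i => (hcF i.2).2.1)
        (fun i => hFcpt i (hcF i.2))
        (fun i => mazur i (hcF i.2).2.2.1 (hcF i.2).2.2.2.1)
    rw [← Set.sInter_eq_iInter] at hnonempty
    refine ⟨⋂₀ c, ⟨?_, hnonempty, ?_, ?_, ?_⟩, fun s hs => Set.sInter_subset_of_mem hs⟩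
    · obtain ⟨s0, hs0⟩ := hcne
      exact (Set.sInter_subset_of_mem hs0).trans (hcF hs0).1
    · exact convex_sInter (fun s hs => (hcF hs).2.2.1)
    · exact kirk_isClosed_sInter (ftop n) (fun s hs => (hcF hs).2.2.2.1)
    · exact fun x hx => Set.mem_sInter.2
        (fun s hs => (hcF hs).2.2.2.2 (Set.mem_sInter.1 hx s hs))
  obtain ⟨D, hDK, hDmin⟩ := zorn_superset_nonempty F hchain K hKF
  obtain ⟨hDsubK, hDne, hDconv, hDcl, hDmaps⟩ := hDmin.1
  have hbddD : ∀ u ∈ D, ∀ v ∈ D, n (v - u) ≤ Cb :=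
    fun u hu v hv => hKbound u (hDsubK hu) v (hDsubK hv)
  have hdiamBdd : BddAbove {ρ | ∃ u ∈ D, ∃ v ∈ D, ρ = n (v - u)} := by
    refine ⟨Cb, ?_⟩
    rintro ρ ⟨u', hu', v, hv, rfl⟩
    exact hbddD u' hu' v hv
  by_cases hdiam : 0 < sSup {r | ∃ u ∈ D, ∃ v ∈ D, r = n (v - u)}
  · exfalso
    obtain ⟨u, huD, hlt⟩ := h_normal D hDsubK hDconv ⟨Cb, hbddD⟩ hdiam
    set ru := sSup {r | ∃ v ∈ D, r = n (v - u)} with hrudef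
    have hruBdd : BddAbove {r | ∃ v ∈ D, r = n (v - u)} := by
      refine ⟨Cb, ?_⟩
      rintro ρ ⟨v, hv, rfl⟩
      exact hbddD u huD v hv
    have hru0 : 0 ≤ ru := by
      refine le_csSup hruBdd ⟨u, huD, ?_⟩
      rw [sub_self, n0]
    have hruD : ∀ v ∈ D, n (v - u) ≤ ru := fun v hv => le_csSup hruBdd ⟨v, hv, rfl⟩
    have hTw : ∀ w, w ∈ D → (∀ v ∈ D, n (v - w) ≤ ru) → ∀ v ∈ D, n (v - T w) ≤ ru := by
      intro w hwD hw
      have hTwD : T w ∈ D := hDmaps hwD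
      have hGF : {v | v ∈ D ∧ n (v - T w) ≤ ru} ∈ F := by
        refine ⟨fun v hv => hDsubK hv.1, ⟨T w, hTwD, by rw [sub_self, n0]; exact hru0⟩,
          ?_, ?_, ?_⟩
        · rintro v1 ⟨hv1D, hv1⟩ v2 ⟨hv2D, hv2⟩ a b ha hb hab
          refine ⟨hDconv hv1D hv2D ha hb hab, ?_⟩
          have hTwc : a • T w + b • T w = T w := by rw [← add_smul, hab, one_smul]
          have heq : (a • v1 + b • v2) - T w = a • (v1 - T w) + b • (v2 - T w) := by
            calc (a • v1 + b • v2) - T w = (a • v1 + b • v2) - (a • T w + b • T w) := by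
                  rw [hTwc]
              _ = a • (v1 - T w) + b • (v2 - T w) := by rw [smul_sub, smul_sub]; abel
          show n ((a • v1 + b • v2) - T w) ≤ ru
          rw [heq]
          exact kirk_combo_le n h_hom h_sub ru _ _ a b ha hb hab hv1 hv2
        · have hrep : {v | v ∈ D ∧ n (v - T w) ≤ ru} = D ∩ {v | n (v - T w) ≤ ru} := rfl
          rw [hrep]
          exact kirk_isClosed_inter (ftop n) hDcl (kirk_fwdball_closed n h_hom h_sub Cc hCc0 hCn (T w) ru)
        · rintro v ⟨hvD, _⟩
          refine ⟨hDmaps hvD, ?_⟩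
          have h1 : n (T v - T w) ≤ n (v - w) := hT_nonexp w (hDsubK hwD) v (hDsubK hvD)
          exact h1.trans (hw v hvD)
      have hDG : D ⊆ {v | v ∈ D ∧ n (v - T w) ≤ ru} := hDmin.2 hGF (fun v hv => hv.1)
      exact fun v hv => (hDG hv).2
    have hD'F : {w | w ∈ D ∧ ∀ v ∈ D, n (v - w) ≤ ru} ∈ F := by
      refine ⟨fun w hw => hDsubK hw.1, ⟨u, huD, hruD⟩, ?_, ?_, ?_⟩
      · rintro w1 ⟨hw1D, hw1⟩ w2 ⟨hw2D, hw2⟩ a b ha hb hab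
        refine ⟨hDconv hw1D hw2D ha hb hab, fun v hv => ?_⟩
        have hvc : a • v + b • v = v := by rw [← add_smul, hab, one_smul]
        have heq : v - (a • w1 + b • w2) = a • (v - w1) + b • (v - w2) := by
          calc v - (a • w1 + b • w2) = (a • v + b • v) - (a • w1 + b • w2) := by rw [hvc]
            _ = a • (v - w1) + b • (v - w2) := by rw [smul_sub, smul_sub]; abel
        rw [heq]
        exact kirk_combo_le n h_hom h_sub ru _ _ a b ha hb hab (hw1 v hv) (hw2 v hv)
      · have hrep : {w | w ∈ D ∧ ∀ v ∈ D, n (v - w) ≤ ru} =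
            D ∩ ⋂ v ∈ D, {w | n (v - w) ≤ ru} := by
          ext w
          simp only [Set.mem_inter_iff, Set.mem_iInter, Set.mem_setOf_eq]
        rw [hrep]
        exact kirk_isClosed_inter (ftop n) hDcl
          (kirk_isClosed_biInter (ftop n) (fun v _ => kirk_revball_closed n h_hom h_sub v ru))
      · rintro w ⟨hwD, hw⟩
        exact ⟨hDmaps hwD, hTw w hwD hw⟩
    have hDD' : D ⊆ {w | w ∈ D ∧ ∀ v ∈ D, n (v - w) ≤ ru} :=
      hDmin.2 hD'F (fun w hw => hw.1)
    have hsup_le : sSup {r | ∃ u' ∈ D, ∃ v ∈ D, r = n (v - u')} ≤ ru := by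
      apply csSup_le
      · obtain ⟨w, hw⟩ := hDne
        exact ⟨n (w - w), w, hw, w, hw, rfl⟩
      · rintro ρ ⟨u', hu', v, hv, rfl⟩
        exact (hDD' hu').2 v hv
    linarith
  · push_neg at hdiam
    obtain ⟨x1, hx1⟩ := hDne
    have hTx1 : T x1 = x1 := by
      have hTmem : T x1 ∈ D := hDmaps hx1
      have h1 : n (T x1 - x1) ≤ sSup {r | ∃ u ∈ D, ∃ v ∈ D, r = n (v - u)} :=
        le_csSup hdiamBdd ⟨x1, hx1, T x1, hTmem, rfl⟩
      have h2 : n (T x1 - x1) = 0 := le_antisymm (h1.trans hdiam) (h_nonneg _)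
      exact sub_eq_zero.mp (kirkA n h_eq h_fb _ h2)
    exact ⟨x1, hDsubK hx1, hTx1⟩
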